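/- Suppose L_F and L_R are Lipschitz moduli of F and R on Ω_θ and β > L_F + L_R. Let z̄ = (W̄, b̄₁, b̄₂, V̄) ∈ Z with O(z̄) < θ and z̄ ∉ Ω₁, and define z̃ = (W̄, b̄₁, b̄₂, Ṽ) with ṽₙ = (W̄xₙ + b̄₁)₊ for all n. Then ∑_{n=1}^N eᵀ(ṽₙ − v̄ₙ) < 0, the segment z̄ + t(z̃ − z̄) lies in Z for all t ∈ [0,1], and there exists t₁ ∈ (0,1] such that for all t ∈ (0, t₁): O(z̄ + t(z̃ − z̄)) − O(z̄) ≤ t(β − (L_F + L_R))∑_{n=1}^N eᵀ(ṽₙ − v̄ₙ) < 0. -/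
import Mathlib


open scoped BigOperators

noncomputable section

/-- A point `z = (W, b₁, b₂, V)`. -/
abbrev Pt (N N₀ N₁ : ℕ) : Type :=
  Matrix (Fin N₁) (Fin N₀) ℝ × (Fin N₁ → ℝ) × (Fin N₀ → ℝ) × Matrix (Fin N₁) (Fin N) ℝ

/-- ReLU: positive part. -/
def relu (y : ℝ) : ℝ := max y 0

variable {N N₀ N₁ : ℕ}

/-- squared Euclidean norm of a point `z = (W,b₁,b₂,V)`. -/
def sqnormPt (z : Pt N N₀ N₁) : ℝ :=
  (∑ i, ∑ j, (z.1 i j) ^ 2) + (∑ i, (z.2.1 i) ^ 2) + (∑ j, (z.2.2.1 j) ^ 2)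
    + (∑ i, ∑ n, (z.2.2.2 i n) ^ 2)

/-- Euclidean norm of a point. -/
def normPt (z : Pt N N₀ N₁) : ℝ := Real.sqrt (sqnormPt z)

/-- Euclidean distance between points. -/
def distPt (z z' : Pt N N₀ N₁) : ℝ := normPt (z - z')

/-- `(W xₙ + b₁)ᵢ`. -/
def preact (X : Matrix (Fin N₀) (Fin N) ℝ) (z : Pt N N₀ N₁) (i : Fin N₁) (n : Fin N) : ℝ :=
  (∑ j, z.1 i j * X j n) + z.2.1 i

/-- `(Wᵀ vₙ + b₂)ⱼ`. -/
def outPre (z : Pt N N₀ N₁) (j : Fin N₀) (n : Fin N) : ℝ :=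
  (∑ i, z.1 i j * z.2.2.2 i n) + z.2.2.1 j

/-- fidelity term `F(z)`. -/
def Fv (X : Matrix (Fin N₀) (Fin N) ℝ) (z : Pt N N₀ N₁) : ℝ :=
  (1 / (N : ℝ)) * ∑ n, ∑ j, (relu (outPre z j n) - X j n) ^ 2

/-- regularization term `R(z)`. -/
def Rv (lam₁ lam₂ : ℝ) (z : Pt N N₀ N₁) : ℝ :=
  lam₁ * (∑ n, ∑ i, z.2.2.2 i n) + lam₂ * ∑ i, ∑ j, (z.1 i j) ^ 2

/-- penalty term `P(z)`. -/
def Pv (β : ℝ) (X : Matrix (Fin N₀) (Fin N) ℝ) (z : Pt N N₀ N₁) : ℝ :=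
  β * ∑ n, ∑ i, (z.2.2.2 i n - relu (preact X z i n))

/-- objective `O(z) = F(z) + R(z) + P(z)`. -/
def Ov (lam₁ lam₂ β : ℝ) (X : Matrix (Fin N₀) (Fin N) ℝ) (z : Pt N N₀ N₁) : ℝ :=
  Fv X z + Rv lam₁ lam₂ z + Pv β X z

/-- `Ω₁ = {z : vₙ = (Wxₙ + b₁)₊}`. -/
def Omega1 (X : Matrix (Fin N₀) (Fin N) ℝ) : Set (Pt N N₀ N₁) :=
  {z | ∀ i n, z.2.2.2 i n = relu (preact X z i n)}

/-- `Ω₂ = {z : vₙ ≥ (Wxₙ + b₁)₊}`. -/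
def Omega2 (X : Matrix (Fin N₀) (Fin N) ℝ) : Set (Pt N N₀ N₁) :=
  {z | ∀ i n, relu (preact X z i n) ≤ z.2.2.2 i n}

/-- level set `Ω_θ = {z ∈ Ω₂ : O(z) ≤ θ}` (also used for `Ω_δ`). -/
def OmegaLev (lam₁ lam₂ β θ : ℝ) (X : Matrix (Fin N₀) (Fin N) ℝ) : Set (Pt N N₀ N₁) :=
  {z | z ∈ Omega2 X ∧ Ov lam₁ lam₂ β X z ≤ θ}

/-- `‖X‖₁`: maximum absolute column sum. -/
def Xcol1 (X : Matrix (Fin N₀) (Fin N) ℝ) : ℝ := ⨆ n, ∑ j, |X j n|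

/-- the constant `α`. -/
def alphaC (N N₀ N₁ : ℕ) (lam₁ lam₂ θ : ℝ) (X : Matrix (Fin N₀) (Fin N) ℝ) : ℝ :=
  max (θ / lam₁ + Real.sqrt ((N₁ : ℝ) * (N₀ : ℝ) * θ / lam₂) * Xcol1 X)
      (θ * Real.sqrt ((N₁ : ℝ) * (N₀ : ℝ) * θ) / (lam₁ * Real.sqrt lam₂)
        + Real.sqrt ((N : ℝ) * θ) + Xcol1 X)

/-- `Ω₃ = {z : ‖b₁‖_∞ ≤ α, ‖b₂‖_∞ ≤ α}`. -/
def Omega3 (lam₁ lam₂ θ : ℝ) (X : Matrix (Fin N₀) (Fin N) ℝ) : Set (Pt N N₀ N₁) :=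
  {z | (∀ i, |z.2.1 i| ≤ alphaC N N₀ N₁ lam₁ lam₂ θ X) ∧
       (∀ j, |z.2.2.1 j| ≤ alphaC N N₀ N₁ lam₁ lam₂ θ X)}

/-- `Z = Ω₂ ∩ Ω₃`. -/
def Zset (lam₁ lam₂ θ : ℝ) (X : Matrix (Fin N₀) (Fin N) ℝ) : Set (Pt N N₀ N₁) :=
  Omega2 X ∩ Omega3 lam₁ lam₂ θ X

/-- tangent cone of `C` at `zb`. -/
def TangentCone (C : Set (Pt N N₀ N₁)) (zb : Pt N N₀ N₁) : Set (Pt N N₀ N₁) :=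
  {d | ∃ zs : ℕ → Pt N N₀ N₁, ∃ ts : ℕ → ℝ,
      (∀ k, zs k ∈ C) ∧ (∀ k, 0 < ts k) ∧
      Filter.Tendsto ts Filter.atTop (nhds 0) ∧
      Filter.Tendsto (fun k => distPt (zs k) zb) Filter.atTop (nhds 0) ∧
      Filter.Tendsto (fun k => normPt ((ts k)⁻¹ • (zs k - zb) - d)) Filter.atTop (nhds 0)}

/-- `zb` is a d-stationary point of `f` over `C`:
`liminf_{t↓0} (f(zb + t d) - f(zb))/t ≥ 0` for every tangent direction `d`. -/
def DStationary (f : Pt N N₀ N₁ → ℝ) (C : Set (Pt N N₀ N₁)) (zb : Pt N N₀ N₁) : Prop :=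
  zb ∈ C ∧ ∀ d ∈ TangentCone C zb, ∀ ε : ℝ, 0 < ε → ∃ δ : ℝ, 0 < δ ∧
    ∀ t : ℝ, 0 < t → t < δ → -ε < (f (zb + t • d) - f zb) / t

/-- smoothing function `s_μ` of the ReLU. -/
def smoothRelu (μ y : ℝ) : ℝ :=
  if y < 0 then 0 else if y ≤ μ then y ^ 2 / (2 * μ) else y - μ / 2

/-- smoothed fidelity term `F̃(z, μ)`. -/
def Ftil (X : Matrix (Fin N₀) (Fin N) ℝ) (z : Pt N N₀ N₁) (μ : ℝ) : ℝ :=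
  (1 / (N : ℝ)) * (∑ n, ∑ j, (relu (outPre z j n)) ^ 2)
    + (1 / (N : ℝ)) * (∑ j, ∑ n, (X j n) ^ 2)
    - (2 / (N : ℝ)) * ∑ n, ∑ j, X j n * smoothRelu μ (outPre z j n)

/-- smoothed penalty term `P̃(z, μ)`. -/
def Ptil (β : ℝ) (X : Matrix (Fin N₀) (Fin N) ℝ) (z : Pt N N₀ N₁) (μ : ℝ) : ℝ :=
  β * ∑ n, ∑ i, (z.2.2.2 i n - smoothRelu μ (preact X z i n))

/-- smoothed objective `Õ(z, μ)`. -/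
def Otil (lam₁ lam₂ β : ℝ) (X : Matrix (Fin N₀) (Fin N) ℝ) (z : Pt N N₀ N₁) (μ : ℝ) : ℝ :=
  Ftil X z μ + Ptil β X z μ + Rv lam₁ lam₂ z
lemma sqnormPt_smul (t : ℝ) (z : Pt N N₀ N₁) : sqnormPt (t • z) = t ^ 2 * sqnormPt z := by
  unfold sqnormPt
  simp only [Prod.smul_fst, Prod.smul_snd, Matrix.smul_apply, Pi.smul_apply, smul_eq_mul,
    mul_pow, ← Finset.mul_sum]
  ring

lemma contOv (lam₁ lam₂ β : ℝ) (X : Matrix (Fin N₀) (Fin N) ℝ) :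
    Continuous (fun z : Pt N N₀ N₁ => Ov lam₁ lam₂ β X z) := by
  unfold Ov Fv Rv Pv relu preact outPre
  fun_prop

lemma sqrt_dsum_le {ι κ : Type*} [Fintype ι] [Fintype κ] (f : ι → κ → ℝ) :
    Real.sqrt (∑ i, ∑ n, (f i n) ^ 2) ≤ ∑ i, ∑ n, |f i n| := by
  have h2 : ∑ i, ∑ n, (f i n) ^ 2 ≤ (∑ i, ∑ n, |f i n|) ^ 2 := by
    calc ∑ i, ∑ n, (f i n) ^ 2 ≤ ∑ i, (∑ n, |f i n|) ^ 2 := by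
          refine Finset.sum_le_sum fun i _ => ?_
          calc ∑ n, (f i n) ^ 2 = ∑ n, |f i n| ^ 2 := by simp [sq_abs]
            _ ≤ (∑ n, |f i n|) ^ 2 :=
                Finset.sum_sq_le_sq_sum_of_nonneg fun n _ => abs_nonneg _
      _ ≤ (∑ i, ∑ n, |f i n|) ^ 2 :=
          Finset.sum_sq_le_sq_sum_of_nonneg fun i _ =>
            Finset.sum_nonneg fun n _ => abs_nonneg _
  calc Real.sqrt (∑ i, ∑ n, (f i n) ^ 2) ≤ Real.sqrt ((∑ i, ∑ n, |f i n|) ^ 2) :=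
        Real.sqrt_le_sqrt h2
    _ = abs (∑ i, ∑ n, |f i n|) := Real.sqrt_sq_eq_abs _
    _ = ∑ i, ∑ n, |f i n| := abs_of_nonneg (Finset.sum_nonneg fun i _ =>
          Finset.sum_nonneg fun n _ => abs_nonneg _)

lemma dsum_add {ι κ : Type*} [Fintype ι] [Fintype κ] (t : ℝ) (A B : ι → κ → ℝ) :
    ∑ i, ∑ n, (A i n + t * B i n) = (∑ i, ∑ n, A i n) + t * ∑ i, ∑ n, B i n := by
  simp [Finset.sum_add_distrib, Finset.mul_sum]
theorem stmt13 (N N₀ N₁ : ℕ) (hN : 0 < N) (hN₀ : 0 < N₀) (hN₁ : 0 < N₁)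
    (lam₁ lam₂ β θ : ℝ) (hlam₁ : 0 < lam₁) (hlam₂ : 0 < lam₂) (hbeta : 0 < β)
    (X : Matrix (Fin N₀) (Fin N) ℝ)
    (hθ : (1 / (N : ℝ)) * ∑ j, ∑ n, (X j n) ^ 2 < θ)
    (LF LR : ℝ) (hLF : 0 ≤ LF) (hLR : 0 ≤ LR)
    (hLipF : ∀ z : Pt N N₀ N₁, z ∈ OmegaLev lam₁ lam₂ β θ X →
      ∀ z' : Pt N N₀ N₁, z' ∈ OmegaLev lam₁ lam₂ β θ X →
        |Fv X z - Fv X z'| ≤ LF * distPt z z')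
    (hLipR : ∀ z : Pt N N₀ N₁, z ∈ OmegaLev lam₁ lam₂ β θ X →
      ∀ z' : Pt N N₀ N₁, z' ∈ OmegaLev lam₁ lam₂ β θ X →
        |Rv lam₁ lam₂ z - Rv lam₁ lam₂ z'| ≤ LR * distPt z z')
    (hpen : LF + LR < β)
    (zb : Pt N N₀ N₁) (hzbZ : zb ∈ Zset lam₁ lam₂ θ X)
    (hzbO : Ov lam₁ lam₂ β X zb < θ) (hzbn : zb ∉ Omega1 X)
    (zt : Pt N N₀ N₁)
    (hzt : zt = (zb.1, zb.2.1, zb.2.2.1, Matrix.of fun i n => relu (preact X zb i n))) :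
    (∑ n, ∑ i, (zt.2.2.2 i n - zb.2.2.2 i n)) < 0 ∧
    (∀ t : ℝ, 0 ≤ t → t ≤ 1 → zb + t • (zt - zb) ∈ Zset lam₁ lam₂ θ X) ∧
    (∃ t₁ : ℝ, 0 < t₁ ∧ t₁ ≤ 1 ∧ ∀ t : ℝ, 0 < t → t < t₁ →
      Ov lam₁ lam₂ β X (zb + t • (zt - zb)) - Ov lam₁ lam₂ β X zb
        ≤ t * (β - (LF + LR)) * (∑ n, ∑ i, (zt.2.2.2 i n - zb.2.2.2 i n)) ∧
      t * (β - (LF + LR)) * (∑ n, ∑ i, (zt.2.2.2 i n - zb.2.2.2 i n)) < 0) := by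
  obtain ⟨hzb2, hzb3⟩ := hzbZ
  have hle : ∀ i n, relu (preact X zb i n) ≤ zb.2.2.2 i n := hzb2
  set S : ℝ := ∑ n, ∑ i, (relu (preact X zb i n) - zb.2.2.2 i n) with hSdef
  have hztV : ∀ i n, zt.2.2.2 i n = relu (preact X zb i n) := by
    intro i n; rw [hzt]; rfl
  have hSgoal : (∑ n, ∑ i, (zt.2.2.2 i n - zb.2.2.2 i n)) = S := by
    rw [hSdef]
    exact Finset.sum_congr rfl fun n _ => Finset.sum_congr rfl fun i _ => by rw [hztV]
  -- S < 0
  have hSneg : S < 0 := by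
    obtain ⟨i0, n0, hne⟩ : ∃ i n, zb.2.2.2 i n ≠ relu (preact X zb i n) := by
      by_contra h; push_neg at h; exact hzbn h
    have key : ∀ i n, relu (preact X zb i n) - zb.2.2.2 i n ≤ 0 :=
      fun i n => sub_nonpos.2 (hle i n)
    have hlt : relu (preact X zb i0 n0) - zb.2.2.2 i0 n0 < 0 :=
      sub_neg.2 (lt_of_le_of_ne (hle i0 n0) fun h => hne h.symm)
    have houter : S < ∑ _n : Fin N, (0 : ℝ) := by
      refine Finset.sum_lt_sum (fun n _ => Finset.sum_nonpos fun i _ => key i n)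
        ⟨n0, Finset.mem_univ n0, ?_⟩
      have := Finset.sum_lt_sum (s := Finset.univ)
        (f := fun i => relu (preact X zb i n0) - zb.2.2.2 i n0) (g := fun _ => (0 : ℝ))
        (fun i _ => key i n0) ⟨i0, Finset.mem_univ i0, hlt⟩
      simpa using this
    simpa using houter
  -- component facts
  have hc1 : ∀ t : ℝ, (zb + t • (zt - zb)).1 = zb.1 := by intro t; rw [hzt]; simp
  have hb1 : ∀ t : ℝ, (zb + t • (zt - zb)).2.1 = zb.2.1 := by intro t; rw [hzt]; simp
  have hb2 : ∀ t : ℝ, (zb + t • (zt - zb)).2.2.1 = zb.2.2.1 := by intro t; rw [hzt]; simp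
  have hVt : ∀ (t : ℝ) i n, (zb + t • (zt - zb)).2.2.2 i n
      = zb.2.2.2 i n + t * (relu (preact X zb i n) - zb.2.2.2 i n) := by
    intro t i n; rw [hzt]
    simp [Prod.snd_add, Prod.snd_sub, Prod.smul_snd, Matrix.add_apply, Matrix.sub_apply,
      Matrix.smul_apply, smul_eq_mul]
  have hpret : ∀ (t : ℝ) i n, preact X (zb + t • (zt - zb)) i n = preact X zb i n := by
    intro t i n; unfold preact; rw [hc1, hb1]
  -- segment membership
  have hseg : ∀ t : ℝ, 0 ≤ t → t ≤ 1 → zb + t • (zt - zb) ∈ Zset lam₁ lam₂ θ X := by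
    intro t ht0 ht1
    refine ⟨fun i n => ?_, fun i => ?_, fun j => ?_⟩
    · rw [hpret, hVt]
      have := mul_nonneg (sub_nonneg.2 ht1) (sub_nonneg.2 (hle i n))
      nlinarith [hle i n]
    · rw [hb1]; exact hzb3.1 i
    · rw [hb2]; exact hzb3.2 j
  refine ⟨by rw [hSgoal]; exact hSneg, hseg, ?_⟩
  -- continuity argument
  have hgc : Continuous (fun t : ℝ => Ov lam₁ lam₂ β X (zb + t • (zt - zb))) :=
    (contOv lam₁ lam₂ β X).comp (continuous_const.add (continuous_id.smul continuous_const))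
  have h0lt : (fun t : ℝ => Ov lam₁ lam₂ β X (zb + t • (zt - zb))) 0 < θ := by
    simpa using hzbO
  have hev : ∀ᶠ t in nhds (0 : ℝ), Ov lam₁ lam₂ β X (zb + t • (zt - zb)) < θ :=
    (hgc.continuousAt (x := 0)).eventually_lt_const h0lt
  obtain ⟨ε, hε, hball⟩ := Metric.eventually_nhds_iff.mp hev
  refine ⟨min ε 1, lt_min hε one_pos, min_le_right _ _, ?_⟩
  intro t ht htlt
  have ht1 : t ≤ 1 := le_of_lt (lt_of_lt_of_le htlt (min_le_right _ _))
  have htε : dist t (0 : ℝ) < ε := by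
    rw [Real.dist_eq, sub_zero, abs_of_pos ht]
    exact lt_of_lt_of_le htlt (min_le_left _ _)
  have hOt : Ov lam₁ lam₂ β X (zb + t • (zt - zb)) < θ := hball htε
  have hmem : zb + t • (zt - zb) ∈ OmegaLev lam₁ lam₂ β θ X :=
    ⟨(hseg t ht.le ht1).1, hOt.le⟩
  have hzbmem : zb ∈ OmegaLev lam₁ lam₂ β θ X := ⟨hzb2, hzbO.le⟩
  -- distance
  have hsub : (zb + t • (zt - zb)) - zb = t • (zt - zb) := add_sub_cancel_left zb _
  have hdist : distPt (zb + t • (zt - zb)) zb = t * normPt (zt - zb) := by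
    unfold distPt; rw [hsub]; unfold normPt
    rw [sqnormPt_smul, Real.sqrt_mul (sq_nonneg t), Real.sqrt_sq ht.le]
  have hKle : normPt (zt - zb) ≤ -S := by
    have hnz : normPt (zt - zb)
        = Real.sqrt (∑ i, ∑ n, (relu (preact X zb i n) - zb.2.2.2 i n) ^ 2) := by
      unfold normPt sqnormPt
      rw [hzt]
      simp [Prod.fst_sub, Prod.snd_sub, Matrix.sub_apply, Pi.sub_apply, sub_self]
    rw [hnz]
    calc Real.sqrt (∑ i, ∑ n, (relu (preact X zb i n) - zb.2.2.2 i n) ^ 2)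
        ≤ ∑ i, ∑ n, |relu (preact X zb i n) - zb.2.2.2 i n| := sqrt_dsum_le _
      _ = ∑ i, ∑ n, (zb.2.2.2 i n - relu (preact X zb i n)) := by
          refine Finset.sum_congr rfl fun i _ => Finset.sum_congr rfl fun n _ => ?_
          rw [abs_of_nonpos (sub_nonpos.2 (hle i n)), neg_sub]
      _ = -S := by
          rw [hSdef, Finset.sum_comm]
          simp [← Finset.sum_neg_distrib]
  -- P difference
  have hPd : Pv β X (zb + t • (zt - zb)) = Pv β X zb + β * (t * S) := by
    unfold Pv
    have e1 : ∀ (n : Fin N) (i : Fin N₁),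
        (zb + t • (zt - zb)).2.2.2 i n - relu (preact X (zb + t • (zt - zb)) i n)
        = (zb.2.2.2 i n - relu (preact X zb i n))
          + t * (relu (preact X zb i n) - zb.2.2.2 i n) := by
      intro n i; rw [hVt, hpret]; ring
    rw [Finset.sum_congr rfl fun n _ => Finset.sum_congr rfl fun i _ => e1 n i, dsum_add,
      hSdef]
    ring
  -- F and R differences
  have hF : Fv X (zb + t • (zt - zb)) - Fv X zb ≤ LF * (t * (-S)) := by
    have h := le_of_abs_le (hLipF _ hmem zb hzbmem)
    rw [hdist] at h
    calc Fv X (zb + t • (zt - zb)) - Fv X zb ≤ LF * (t * normPt (zt - zb)) := h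
      _ ≤ LF * (t * (-S)) :=
        mul_le_mul_of_nonneg_left (mul_le_mul_of_nonneg_left hKle ht.le) hLF
  have hR : Rv lam₁ lam₂ (zb + t • (zt - zb)) - Rv lam₁ lam₂ zb ≤ LR * (t * (-S)) := by
    have h := le_of_abs_le (hLipR _ hmem zb hzbmem)
    rw [hdist] at h
    calc Rv lam₁ lam₂ (zb + t • (zt - zb)) - Rv lam₁ lam₂ zb
        ≤ LR * (t * normPt (zt - zb)) := h
      _ ≤ LR * (t * (-S)) :=
        mul_le_mul_of_nonneg_left (mul_le_mul_of_nonneg_left hKle ht.le) hLR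
  have hrng : LF * (t * (-S)) + LR * (t * (-S)) + β * (t * S) = t * (β - (LF + LR)) * S := by
    ring
  have hOexp : Ov lam₁ lam₂ β X (zb + t • (zt - zb)) - Ov lam₁ lam₂ β X zb
      = (Fv X (zb + t • (zt - zb)) - Fv X zb)
        + (Rv lam₁ lam₂ (zb + t • (zt - zb)) - Rv lam₁ lam₂ zb)
        + (Pv β X (zb + t • (zt - zb)) - Pv β X zb) := by
    unfold Ov; ring
  constructor
  · rw [hSgoal, hOexp, hPd]; linarith
  · rw [hSgoal]
    exact mul_neg_of_pos_of_neg (mul_pos ht (by linarith)) hSneg
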